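/- If the click variables {Y_{u,i}} are independent Bernoulli with means θ_{u,i}·γ_{u,i}, then the variance of the IPS estimator L_unbiased = (1/|D|) Σ [ (Y_{u,i}/θ_{u,i})·δ¹_{u,i} + (1 − Y_{u,i}/θ_{u,i})·δ⁰_{u,i} ] equals (1/|D|²) Σ γ_{u,i}·(1/θ_{u,i} − γ_{u,i})·(δ¹_{u,i} − δ⁰_{u,i})². -/

import Mathlib

open MeasureTheory ProbabilityTheory

lemma variance_affine {Ω : Type*} [MeasurableSpace Ω] (μ : Measure Ω) [IsProbabilityMeasure μ]
    (a c : ℝ) (Y : Ω → ℝ) (hY : MemLp Y 2 μ) :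
    variance (fun ω => a + c * Y ω) μ = c ^ 2 * variance Y μ := by
  have hX : MemLp (fun ω => a + c * Y ω) 2 μ := (memLp_const a).add (hY.const_mul c)
  have hY1 : Integrable Y μ := hY.integrable one_le_two
  have hY2 : Integrable (fun ω => Y ω ^ 2) μ := hY.integrable_sq
  rw [variance_eq_sub hX, variance_eq_sub hY]
  have h1 : μ[fun ω => a + c * Y ω] = a + c * μ[Y] := by
    rw [integral_add (integrable_const a) (hY1.const_mul c), integral_const, integral_const_mul]
    simp
  have h2 : μ[(fun ω => a + c * Y ω) ^ 2] = a ^ 2 + 2 * a * c * μ[Y] + c ^ 2 * μ[Y ^ 2] := by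
    have : ((fun ω => a + c * Y ω) ^ 2) = fun ω => a ^ 2 + 2 * a * c * Y ω + c ^ 2 * Y ω ^ 2 := by
      funext ω; simp [Pi.pow_apply]; ring
    rw [this, integral_add (by exact (integrable_const _).add (hY1.const_mul _))
        (hY2.const_mul _), integral_add (integrable_const _) (hY1.const_mul _),
      integral_const, integral_const_mul, integral_const_mul]
    simp [Pi.pow_apply]
  rw [h1, h2]
  ring

/-- Variance of the IPS estimator under independence of the click variables. -/
theorem ips_variance
    {Ω : Type*} [MeasurableSpace Ω] (μ : Measure Ω) [IsProbabilityMeasure μ]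
    {D : Type*} [Fintype D] [Nonempty D]
    (Y : D → Ω → ℝ) (θ γ δ1 δ0 : D → ℝ)
    (hθ : ∀ d, θ d ∈ Set.Ioc (0 : ℝ) 1) (hγ : ∀ d, γ d ∈ Set.Icc (0 : ℝ) 1)
    (hY01 : ∀ d ω, Y d ω = 0 ∨ Y d ω = 1)
    (hYm : ∀ d, Measurable (Y d))
    (hmean : ∀ d, ∫ ω, Y d ω ∂μ = θ d * γ d)
    (hindep : iIndepFun Y μ) :
    variance (fun ω => (1 / (Fintype.card D : ℝ)) *
        ∑ d, ((Y d ω / θ d) * δ1 d + (1 - Y d ω / θ d) * δ0 d)) μ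
      = (1 / (Fintype.card D : ℝ) ^ 2) *
        ∑ d, γ d * (1 / θ d - γ d) * (δ1 d - δ0 d) ^ 2 := by
  classical
  set X : D → Ω → ℝ := fun d ω => (Y d ω / θ d) * δ1 d + (1 - Y d ω / θ d) * δ0 d with hXdef
  have hθ0 : ∀ d, θ d ≠ 0 := fun d => ne_of_gt (hθ d).1
  have hXaff : ∀ d, X d = fun ω => δ0 d + ((δ1 d - δ0 d) / θ d) * Y d ω := by
    intro d; funext ω
    field_simp [hXdef]
    ring
  have hYmem : ∀ d, MemLp (Y d) 2 μ := by
    intro d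
    refine MemLp.of_bound (hYm d).aestronglyMeasurable 1 (ae_of_all _ fun ω => ?_)
    rcases hY01 d ω with h | h <;> simp [h]
  have hXmem : ∀ d, MemLp (X d) 2 μ := by
    intro d; rw [hXaff d]
    exact (memLp_const (δ0 d)).add ((hYmem d).const_mul ((δ1 d - δ0 d) / θ d))
  have hvarY : ∀ d, variance (Y d) μ = θ d * γ d - (θ d * γ d) ^ 2 := by
    intro d
    rw [variance_eq_sub (hYmem d)]
    have hsq : μ[Y d ^ 2] = μ[Y d] := by
      apply integral_congr_ae; apply ae_of_all; intro ω
      rcases hY01 d ω with h | h <;> simp [Pi.pow_apply, h]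
    rw [hsq, hmean d]
  have hvarX : ∀ d, variance (X d) μ = γ d * (1 / θ d - γ d) * (δ1 d - δ0 d) ^ 2 := by
    intro d
    rw [hXaff d, variance_affine μ _ _ _ (hYmem d), hvarY d]
    field_simp [hθ0 d]
  have hpair : Set.Pairwise ↑(Finset.univ : Finset D)
      (fun i j => IndepFun (X i) (X j) μ) := by
    intro i _ j _ hij
    have := hindep.indepFun hij
    exact this.comp (by fun_prop : Measurable fun x : ℝ => (x / θ i) * δ1 i + (1 - x / θ i) * δ0 i)
      (by fun_prop : Measurable fun x : ℝ => (x / θ j) * δ1 j + (1 - x / θ j) * δ0 j)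
  have hsum : variance (∑ d, X d) μ = ∑ d, variance (X d) μ :=
    IndepFun.variance_sum (fun d _ => hXmem d) hpair
  have hfun : (fun ω => (1 / (Fintype.card D : ℝ)) * ∑ d, X d ω)
      = fun ω => (1 / (Fintype.card D : ℝ)) * (∑ d, X d) ω := by
    funext ω; simp
  calc variance (fun ω => (1 / (Fintype.card D : ℝ)) * ∑ d, X d ω) μ
      = (1 / (Fintype.card D : ℝ)) ^ 2 * variance (∑ d, X d) μ := by
        rw [hfun, variance_const_mul]
    _ = (1 / (Fintype.card D : ℝ) ^ 2) * ∑ d, γ d * (1 / θ d - γ d) * (δ1 d - δ0 d) ^ 2 := by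
        rw [hsum]
        simp_rw [hvarX]
        rw [div_pow]; ring
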